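/- Let p and q be distinct primitive words of equal length over an alphabet with at least two letters. Then for all positive integers n, m with (n,m) ≠ (1,1), the word p^n q^m is primitive. -/

import Mathlib

variable {A : Type*}

/-- k-fold concatenation of a word with itself. -/
def pw (w : List A) : ℕ → List A
  | 0 => []
  | n + 1 => w ++ pw w n

/-- A nonempty word is primitive if it is not a proper power. -/
def Primitive (w : List A) : Prop :=
  w ≠ [] ∧ ∀ (v : List A) (m : ℕ), w = pw v m → m = 1

theorem pw_length (w : List A) (n : ℕ) : (pw w n).length = n * w.length := by
  induction n with
  | zero => simp [pw]
  | succ k ih => simp [pw, ih]; ring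

theorem pw_add (w : List A) (a b : ℕ) : pw w (a + b) = pw w a ++ pw w b := by
  induction a with
  | zero => simp [pw]
  | succ k ih => rw [Nat.succ_add]; simp [pw, ih]

theorem pw_one (w : List A) : pw w 1 = w := by simp [pw]

theorem pw_two (w : List A) : pw w 2 = w ++ w := by simp [pw]

theorem pw_three (w : List A) : pw w 3 = w ++ (w ++ w) := by simp [pw]

theorem pw_pw (w : List A) (t k : ℕ) : pw (pw w t) k = pw w (t * k) := by
  induction k with
  | zero => simp [pw]
  | succ k ih =>
    have h : t * (k + 1) = t + t * k := by ring
    show pw w t ++ pw (pw w t) k = pw w (t * (k + 1))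
    rw [ih, ← pw_add, ← h]

theorem pw_succ_pred (w : List A) {n : ℕ} (hn : 0 < n) : pw w n = w ++ pw w (n - 1) := by
  cases n with
  | zero => omega
  | succ k => rfl

theorem pw_succ' (w : List A) {n : ℕ} (hn : 0 < n) : pw w n = pw w (n - 1) ++ w := by
  conv_lhs => rw [show n = (n - 1) + 1 by omega]
  rw [pw_add, pw_one]

theorem pw_inj {p q : List A} {n : ℕ} (hn : 0 < n) (h : pw p n = pw q n)
    (hlen : p.length = q.length) : p = q := by
  rw [pw_succ_pred p hn, pw_succ_pred q hn] at h
  exact (List.append_inj h hlen).1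

def Per (w : List A) (d : ℕ) : Prop :=
  ∀ i j, ∀ _hij : i + d = j, ∀ hj : j < w.length, w[i]'(by omega) = w[j]'hj

theorem getElem_congr' (w : List A) {i j : ℕ} (h : i = j) (hi : i < w.length)
    (hj : j < w.length) : w[i]'hi = w[j]'hj := by subst h; rfl

theorem per_append_left {u s : List A} {d : ℕ} (h : Per (u ++ s) d) : Per u d := by
  intro i j hij hj
  have hj' : j < (u ++ s).length := by simp; omega
  have h1 := h i j hij hj'
  rwa [List.getElem_append_left (by omega), List.getElem_append_left hj] at h1

theorem per_append_right {u s : List A} {d : ℕ} (h : Per (u ++ s) d) : Per s d := by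
  intro i j hij hj
  have hj' : u.length + j < (u ++ s).length := by simp; omega
  have h1 := h (u.length + i) (u.length + j) (by omega) hj'
  rw [List.getElem_append_right (by omega), List.getElem_append_right (by omega)] at h1
  · rw [getElem_congr' s (show u.length + i - u.length = i by omega),
      getElem_congr' s (show u.length + j - u.length = j by omega)] at h1
    · exact h1
    all_goals omega
  all_goals omega

theorem getElem_pw (p : List A) (hL : 0 < p.length) (n : ℕ) :
    ∀ i (h : i < (pw p n).length), (pw p n)[i]'h = p[i % p.length]'(Nat.mod_lt i hL) := by
  induction n with
  | zero => intro i h; simp [pw] at h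
  | succ k ih =>
    intro i h
    show (p ++ pw p k)[i]'(by rw [List.length_append, pw_length]; rw [pw_length, Nat.succ_mul] at h; omega) = _
    by_cases hi : i < p.length
    · rw [List.getElem_append_left hi]
      exact getElem_congr' p (Nat.mod_eq_of_lt hi).symm hi _
    · have h2 : i < (p ++ pw p k).length := h
      rw [List.getElem_append_right (by omega)]
      have h3 : i - p.length < (pw p k).length := by
        have := h2; simp [pw_length] at this ⊢; omega
      rw [ih (i - p.length) h3]
      exact getElem_congr' p (Nat.mod_eq_sub_mod (by omega)).symm _ _

theorem per_pw (p : List A) (n : ℕ) : Per (pw p n) p.length := by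
  rcases Nat.eq_zero_or_pos p.length with hL | hL
  · intro i j hij hj
    rw [pw_length, hL] at hj; omega
  · intro i j hij hj
    rw [getElem_pw p hL n i _, getElem_pw p hL n j hj]
    exact getElem_congr' p (by rw [← hij, Nat.add_mod_right]) _ _

theorem pw_of_per {g : ℕ} (hg : 0 < g) :
    ∀ (s : ℕ) (w : List A), Per w g → w.length = g * s → w = pw (w.take g) s := by
  intro s
  induction s with
  | zero =>
    intro w _ hlen
    simp at hlen
    simp [hlen, pw]
  | succ s ih =>
    intro w hper hlen
    have hg_le : g ≤ w.length := by
      rw [hlen]; calc g = g * 1 := by ring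
        _ ≤ g * (s+1) := Nat.mul_le_mul_left g (by omega)
    have hsplit := (List.take_append_drop g w).symm
    rcases Nat.eq_zero_or_pos s with hs | hs
    · subst hs
      have : w.take g = w := List.take_of_length_le (by omega)
      rw [show pw (w.take g) 1 = w.take g from pw_one _, this]
    · -- drop g w has period g and its take g equals take g w
      have hperd : Per (w.drop g) g := by
        have := per_append_right (s := w.drop g) (u := w.take g) (d := g)
        apply this
        rwa [List.take_append_drop]
      have hlend : (w.drop g).length = g * s := by
        rw [List.length_drop, hlen, Nat.mul_succ]; omega
      have htake : (w.drop g).take g = w.take g := by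
        apply List.ext_getElem
        · rw [List.length_take, List.length_take, List.length_drop, hlen, Nat.mul_succ]
          have := Nat.le_mul_of_pos_right g hs
          omega
        · intro i h1 h2
          have hi : i < g := by rw [List.length_take] at h1; omega
          have hgi : g + i < w.length := by
            rw [hlen, Nat.mul_succ]
            have := Nat.le_mul_of_pos_right g hs
            omega
          rw [List.getElem_take, List.getElem_take, List.getElem_drop]
          exact (hper i (g + i) (by omega) hgi).symm
      have hrec := ih (w.drop g) hperd hlend
      rw [htake] at hrec
      show w = w.take g ++ pw (w.take g) s
      conv_lhs => rw [hsplit]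
      rw [← hrec]

theorem per_zero (w : List A) : Per w 0 := by
  intro i j hij hj
  exact getElem_congr' w (by omega) _ hj

theorem per_sub {w : List A} {d e : ℕ} (hde : d ≤ e) (hlen : d + e ≤ w.length)
    (pd : Per w d) (pe : Per w e) : Per w (e - d) := by
  intro i j hij hj
  by_cases hc : i + e < w.length
  · have h1 := pe i (i + e) rfl hc
    have h2 := pd j (i + e) (by omega) hc
    exact h1.trans h2.symm
  · have hi : i < w.length := by omega
    have h1 := pd (i - d) i (by omega) hi
    have h2 := pe (i - d) j (by omega) hj
    exact h1.symm.trans h2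

theorem fw_aux : ∀ (N d e : ℕ) (w : List A), d + e ≤ N → Per w d → Per w e →
    d + e ≤ w.length → Per w (Nat.gcd d e) := by
  intro N
  induction N with
  | zero =>
    intro d e w hN _ _ _
    have hd : d = 0 := by omega
    have he : e = 0 := by omega
    subst hd he
    exact per_zero w
  | succ N ihN =>
    intro d e w hN pd pe hlen
    rcases Nat.eq_zero_or_pos d with hd | hd
    · subst hd; simpa using pe
    rcases Nat.eq_zero_or_pos e with he | he
    · subst he; simpa using pd
    rcases le_total d e with hde | hed
    · have hsub := per_sub hde hlen pd pe
      have h1 := ihN d (e - d) w (by omega) pd hsub (by omega)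
      have heq : Nat.gcd d (e - d) = Nat.gcd d e := by
        conv_rhs => rw [show e = (e - d) + d by omega]
        rw [Nat.gcd_add_self_right]
      rwa [heq] at h1
    · have hsub := per_sub hed (by omega) pe pd
      have h1 := ihN e (d - e) w (by omega) pe hsub (by omega)
      have heq : Nat.gcd e (d - e) = Nat.gcd d e := by
        rw [Nat.gcd_comm]
        conv_rhs => rw [show d = (d - e) + e by omega]
        rw [Nat.gcd_add_self_left]
      rwa [heq] at h1

theorem fw {w : List A} {d e : ℕ} (pd : Per w d) (pe : Per w e)
    (h : d + e ≤ w.length) : Per w (Nat.gcd d e) :=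
  fw_aux (d + e) d e w le_rfl pd pe h

theorem not_prim_of_per {p : List A} (hp : Primitive p) {g : ℕ} (hper : Per p g)
    (hg : 0 < g) (hgl : g < p.length) (hdvd : g ∣ p.length) : False := by
  obtain ⟨s, hs⟩ := hdvd
  have h2 : 2 ≤ s := by
    rcases s with _ | _ | s
    · omega
    · omega
    · omega
  have hpow := pw_of_per hg s p hper hs
  have := hp.2 _ s hpow
  omega

theorem pow_mul_pow_primitive (hA : ∃ a b : A, a ≠ b) (p q : List A)
    (hp : Primitive p) (hq : Primitive q) (hpq : p ≠ q) (hlen : p.length = q.length)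
    (n m : ℕ) (hn : 0 < n) (hm : 0 < m) (hnm : (n, m) ≠ (1, 1)) :
    Primitive (pw p n ++ pw q m) := by
  obtain ⟨hpne, hpprim⟩ := hp
  obtain ⟨hqne, hqprim⟩ := hq
  have hL : 0 < p.length := List.length_pos_iff.mpr hpne
  have hL' : 0 < q.length := hlen ▸ hL
  have hnm' : ¬(n = 1 ∧ m = 1) := by
    intro ⟨h1, h2⟩; exact hnm (by simp [h1, h2])
  have hsum : 3 ≤ n + m := by
    rcases Nat.eq_or_lt_of_le hn with h1 | h1
    · rcases Nat.eq_or_lt_of_le hm with h2 | h2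
      · exact absurd ⟨h1.symm, h2.symm⟩ hnm'
      · omega
    · omega
  constructor
  · intro hc
    have h0 := congrArg List.length hc
    rw [List.length_append, pw_length, pw_length] at h0
    simp only [List.length_nil] at h0
    have h1 : 0 < n * p.length := Nat.mul_pos hn hL
    omega
  · intro v k hvk
    by_contra hk1
    have hkd := congrArg List.length hvk
    rw [List.length_append, pw_length, pw_length, pw_length, ← hlen] at hkd
    -- hkd : n * p.length + m * p.length = k * v.length
    have hXn : p.length ≤ n * p.length := Nat.le_mul_of_pos_left _ hn
    have hXm : p.length ≤ m * p.length := Nat.le_mul_of_pos_left _ hm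
    have hk0 : k ≠ 0 := by
      intro h; subst h; omega
    have hk2 : 2 ≤ k := by omega
    have hd : 0 < v.length := by
      rcases Nat.eq_zero_or_pos v.length with h | h
      · rw [h] at hkd; omega
      · exact h
    have perw : Per (pw p n ++ pw q m) v.length := by
      rw [hvk]; exact per_pw v k
    rcases lt_trichotomy v.length p.length with hdL | hdL | hdL
    · -- v.length < p.length
      rcases (show 2 ≤ n ∨ 2 ≤ m by omega) with h2 | h2
      · have hsplit : pw p n ++ pw q m = pw p 2 ++ (pw p (n - 2) ++ pw q m) := by
          conv_lhs => rw [show n = 2 + (n - 2) by omega]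
          rw [pw_add, List.append_assoc]
        rw [hsplit] at perw
        have hfw : Per (pw p 2) (Nat.gcd v.length p.length) :=
          fw (per_append_left perw) (per_pw p 2) (by rw [pw_length]; omega)
        have hgl : Nat.gcd v.length p.length < p.length :=
          lt_of_le_of_lt (Nat.gcd_le_left _ hd) hdL
        have perp : Per p (Nat.gcd v.length p.length) := by
          apply per_append_left (s := pw p 1)
          exact hfw
        exact not_prim_of_per ⟨hpne, hpprim⟩ perp (Nat.gcd_pos_of_pos_left _ hd) hgl
          (Nat.gcd_dvd_right _ _)
      · have hsplit : pw p n ++ pw q m = (pw p n ++ pw q (m - 2)) ++ pw q 2 := by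
          conv_lhs => rw [show m = (m - 2) + 2 by omega]
          rw [pw_add, List.append_assoc]
        rw [hsplit] at perw
        have hfw : Per (pw q 2) (Nat.gcd v.length q.length) :=
          fw (per_append_right perw) (per_pw q 2) (by rw [pw_length, ← hlen]; omega)
        have hgl : Nat.gcd v.length q.length < q.length :=
          lt_of_le_of_lt (Nat.gcd_le_left _ hd) (by omega)
        have perq : Per q (Nat.gcd v.length q.length) := by
          apply per_append_left (s := pw q 1)
          exact hfw
        exact not_prim_of_per ⟨hqne, hqprim⟩ perq (Nat.gcd_pos_of_pos_left _ hd) hgl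
          (Nat.gcd_dvd_right _ _)
    · -- v.length = p.length : first and last blocks give p = v = q
      have hvkL : pw p n ++ pw q m = v ++ pw v (k - 1) := by
        rw [hvk, ← pw_succ_pred v (by omega)]
      have hL1 : pw p n ++ pw q m = p ++ (pw p (n - 1) ++ pw q m) := by
        conv_lhs => rw [pw_succ_pred p hn]
        rw [List.append_assoc]
      have hpv : p = v := (List.append_inj (hL1.symm.trans hvkL) (by omega)).1
      have hvkR : pw p n ++ pw q m = pw v (k - 1) ++ v := by
        rw [hvk, ← pw_succ' v (by omega)]
      have hR : pw p n ++ pw q m = (pw p n ++ pw q (m - 1)) ++ q := by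
        conv_lhs => rw [pw_succ' q hm]
        rw [List.append_assoc]
      have hqv : q = v := by
        have hlen2 : (pw p n ++ pw q (m - 1)).length = (pw v (k - 1)).length := by
          rw [List.length_append, pw_length, pw_length, pw_length, ← hlen,
            Nat.sub_mul, Nat.sub_mul, one_mul]
          omega
        exact (List.append_inj (hR.symm.trans hvkR) hlen2).2
      exact hpq (hpv.trans hqv.symm)
    · -- p.length < v.length
      by_cases h3 : v.length + p.length ≤ n * p.length
      · -- whole power p^n covers v plus a period
        have hfw : Per (pw p n) (Nat.gcd v.length p.length) :=
          fw (per_append_left perw) (per_pw p n) (by rw [pw_length]; omega)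
        have hdvdL : Nat.gcd v.length p.length ∣ p.length := Nat.gcd_dvd_right _ _
        rcases lt_or_eq_of_le (Nat.le_of_dvd hL hdvdL) with hgl | hgl
        · have perp : Per p (Nat.gcd v.length p.length) := by
            apply per_append_left (s := pw p (n - 1))
            rw [← pw_succ_pred p hn]
            exact hfw
          exact not_prim_of_per ⟨hpne, hpprim⟩ perp (Nat.gcd_pos_of_pos_left _ hd) hgl hdvdL
        · have hdvd2 : p.length ∣ v.length := hgl ▸ Nat.gcd_dvd_left _ _
          obtain ⟨t, ht⟩ := hdvd2
          have ht' : t * p.length = v.length := by rw [ht]; ring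
          have ht2 : 2 ≤ t := by
            rcases t with _ | _ | t
            · omega
            · omega
            · omega
          have htn : t + 1 ≤ n := by
            have h1 : (t + 1) * p.length ≤ n * p.length := by
              rw [add_mul, one_mul]; omega
            exact Nat.le_of_mul_le_mul_right h1 hL
          have hsplitL : pw p n ++ pw q m = pw p t ++ (pw p (n - t) ++ pw q m) := by
            conv_lhs => rw [show n = t + (n - t) by omega]
            rw [pw_add, List.append_assoc]
          have hvkL : pw p n ++ pw q m = v ++ pw v (k - 1) := by
            rw [hvk, ← pw_succ_pred v (by omega)]
          have hvt : pw p t = v :=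
            (List.append_inj (hsplitL.symm.trans hvkL) (by rw [pw_length]; omega)).1
          have hfull : pw p n ++ pw q m = pw p (t * k) := by
            rw [hvk, ← hvt, pw_pw]
          have htk : t * k = n + m := by
            have h5 := congrArg List.length hfull
            rw [List.length_append, pw_length, pw_length, pw_length, ← hlen] at h5
            have h6 : (n + m) * p.length = (t * k) * p.length := by rw [add_mul]; omega
            exact (Nat.eq_of_mul_eq_mul_right hL h6).symm
          rw [htk, pw_add] at hfull
          have h7 : pw q m = pw p m := List.append_cancel_left hfull
          exact hpq (pw_inj hm h7 hlen.symm).symm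
      · by_cases h4 : v.length + p.length ≤ m * p.length
        · -- whole power q^m covers v plus a period
          have hfw : Per (pw q m) (Nat.gcd v.length q.length) :=
            fw (per_append_right perw) (per_pw q m) (by rw [pw_length, ← hlen]; omega)
          have hdvdL : Nat.gcd v.length q.length ∣ q.length := Nat.gcd_dvd_right _ _
          rcases lt_or_eq_of_le (Nat.le_of_dvd hL' hdvdL) with hgl | hgl
          · have perq : Per q (Nat.gcd v.length q.length) := by
              apply per_append_left (s := pw q (m - 1))
              rw [← pw_succ_pred q hm]
              exact hfw
            exact not_prim_of_per ⟨hqne, hqprim⟩ perq (Nat.gcd_pos_of_pos_left _ hd) hgl hdvdL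
          · have hdvd2 : q.length ∣ v.length := hgl ▸ Nat.gcd_dvd_left _ _
            obtain ⟨t, ht⟩ := hdvd2
            have ht' : t * p.length = v.length := by rw [ht, hlen]; ring
            have ht2 : 2 ≤ t := by
              rcases t with _ | _ | t
              · omega
              · omega
              · omega
            have htm : t + 1 ≤ m := by
              have h1 : (t + 1) * q.length ≤ m * q.length := by
                rw [add_mul, one_mul, ← hlen]; omega
              exact Nat.le_of_mul_le_mul_right h1 hL'
            have hsplitR : pw p n ++ pw q m = (pw p n ++ pw q (m - t)) ++ pw q t := by
              conv_lhs => rw [show m = (m - t) + t by omega]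
              rw [pw_add, List.append_assoc]
            have hvkR : pw p n ++ pw q m = pw v (k - 1) ++ v := by
              rw [hvk, ← pw_succ' v (by omega)]
            have hvt : pw q t = v := by
              have hlen2 : (pw p n ++ pw q (m - t)).length = (pw v (k - 1)).length := by
                rw [List.length_append, pw_length, pw_length, pw_length, ← hlen,
                  Nat.sub_mul, Nat.sub_mul, one_mul]
                omega
              exact (List.append_inj (hsplitR.symm.trans hvkR) hlen2).2
            have hfull : pw p n ++ pw q m = pw q (t * k) := by
              rw [hvk, ← hvt, pw_pw]
            have htk : t * k = n + m := by
              have h5 := congrArg List.length hfull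
              rw [List.length_append, pw_length, pw_length, pw_length, ← hlen] at h5
              have h6 : (n + m) * p.length = (t * k) * p.length := by rw [add_mul]; omega
              exact (Nat.eq_of_mul_eq_mul_right hL h6).symm
            rw [htk, pw_add] at hfull
            have h7 : pw p n = pw q n :=
              (List.append_inj hfull (by rw [pw_length, pw_length, hlen])).1
            exact hpq (pw_inj hn h7 hlen)
        · -- boundary-straddling cases
          push_neg at h3 h4
          rcases (show k = 2 ∨ k = 3 ∨ 4 ≤ k by omega) with hk | hk | hk4
          · -- k = 2
            subst hk
            have hmn2 : n < m + 2 := by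
              have h1 : n * p.length < (m + 2) * p.length := by
                have h8 : (m + 2) * p.length = m * p.length + 2 * p.length := by ring
                omega
              exact lt_of_mul_lt_mul_right h1 (Nat.zero_le _)
            have hnm2 : m < n + 2 := by
              have h1 : m * p.length < (n + 2) * p.length := by
                have h8 : (n + 2) * p.length = n * p.length + 2 * p.length := by ring
                omega
              exact lt_of_mul_lt_mul_right h1 (Nat.zero_le _)
            rcases (show n = m ∨ n = m + 1 ∨ m = n + 1 by omega) with hc | hc | hc
            · -- n = m : v = p^n = q^n
              subst hc
              have hsplit : pw p n ++ pw q n = v ++ v := by rw [hvk, pw_two]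
              have hs := List.append_inj hsplit (by rw [pw_length]; omega)
              exact hpq (pw_inj hn (hs.1.trans hs.2.symm) hlen)
            · -- n = m + 1 : p is a square
              subst hc
              have hnl : (m + 1) * p.length = m * p.length + p.length := by ring
              have hdm : m * p.length < v.length := by omega
              have h2h : 2 * (v.length - m * p.length) = p.length := by omega
              obtain ⟨a, b, hab, hla, hlb⟩ :
                  ∃ a b : List A, p = a ++ b ∧ a.length = v.length - m * p.length ∧
                    b.length = v.length - m * p.length :=
                ⟨p.take (v.length - m * p.length), p.drop (v.length - m * p.length),
                  (List.take_append_drop _ p).symm, by rw [List.length_take]; omega,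
                  by rw [List.length_drop]; omega⟩
              have hw1 : pw p (m + 1) ++ pw q m = (pw p m ++ a) ++ (b ++ pw q m) := by
                have hstep : pw p (m + 1) = pw p m ++ (a ++ b) := by
                  rw [pw_add, pw_one, ← hab]
                rw [hstep]
                simp [List.append_assoc]
              have hs1 := List.append_inj (hw1.symm.trans (hvk.trans (pw_two v)))
                (by rw [List.length_append, pw_length, hla]; omega)
              have EQ : pw p m ++ a = b ++ pw q m := hs1.1.trans hs1.2.symm
              have hstep2 : pw p m ++ a = a ++ (b ++ (pw p (m - 1) ++ a)) := by
                conv_lhs => rw [pw_succ_pred p hm]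
                rw [hab]
                simp [List.append_assoc]
              rw [hstep2] at EQ
              have hs2 := List.append_inj EQ (by rw [hla, hlb])
              have hp2 : p = pw a 2 := by rw [pw_two, hab, ← hs2.1]
              exact absurd (hpprim a 2 hp2) (by omega)
            · -- m = n + 1 : q is a square
              subst hc
              have hnl : (n + 1) * p.length = n * p.length + p.length := by ring
              have hdn : n * p.length < v.length := by omega
              have h2h : 2 * (v.length - n * p.length) = p.length := by omega
              obtain ⟨c, e, hqce, hlc, hle⟩ :
                  ∃ c e : List A, q = c ++ e ∧ c.length = v.length - n * p.length ∧
                    e.length = v.length - n * p.length :=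
                ⟨q.take (v.length - n * p.length), q.drop (v.length - n * p.length),
                  (List.take_append_drop _ q).symm, by rw [List.length_take, ← hlen]; omega,
                  by rw [List.length_drop, ← hlen]; omega⟩
              have hw1 : pw p n ++ pw q (n + 1) = (pw p n ++ c) ++ (e ++ pw q n) := by
                have hstep : pw q (n + 1) = (c ++ e) ++ pw q n := by
                  rw [← hqce]; rfl
                rw [hstep]
                simp [List.append_assoc]
              have hs1 := List.append_inj (hw1.symm.trans (hvk.trans (pw_two v)))
                (by rw [List.length_append, pw_length, hlc]; omega)
              have EQ : pw p n ++ c = e ++ pw q n := hs1.1.trans hs1.2.symm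
              have hstep2 : e ++ pw q n = (e ++ (pw q (n - 1) ++ c)) ++ e := by
                conv_lhs => rw [pw_succ' q hn]
                rw [hqce]
                simp [List.append_assoc]
              rw [hstep2] at EQ
              have hs2 := List.append_inj EQ (by
                rw [pw_length, List.length_append, List.length_append, pw_length, hlc, hle,
                  Nat.sub_mul, one_mul, ← hlen]
                omega)
              have hq2 : q = pw c 2 := by rw [pw_two, hqce, ← hs2.2]
              exact absurd (hqprim c 2 hq2) (by omega)
          · -- k = 3
            subst hk
            have hn3 : n < 3 := by
              have h1 : n * p.length < 3 * p.length := by omega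
              exact lt_of_mul_lt_mul_right h1 (Nat.zero_le _)
            have hm3 : m < 3 := by
              have h1 : m * p.length < 3 * p.length := by omega
              exact lt_of_mul_lt_mul_right h1 (Nat.zero_le _)
            interval_cases n <;> interval_cases m
            · omega
            · omega
            · omega
            · -- n = 2, m = 2, 3d = 4L
              have h3t : 3 * (v.length - p.length) = p.length := by omega
              have hd4 : v.length = 4 * (v.length - p.length) := by omega
              obtain ⟨a, b, hab, hla, hlb⟩ :
                  ∃ a b : List A, p = a ++ b ∧ a.length = v.length - p.length ∧
                    b.length = 2 * (v.length - p.length) :=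
                ⟨p.take (v.length - p.length), p.drop (v.length - p.length),
                  (List.take_append_drop _ p).symm, by rw [List.length_take]; omega,
                  by rw [List.length_drop]; omega⟩
              obtain ⟨b1, b2, hbb, hlb1, hlb2⟩ :
                  ∃ b1 b2 : List A, b = b1 ++ b2 ∧ b1.length = v.length - p.length ∧
                    b2.length = v.length - p.length :=
                ⟨b.take (v.length - p.length), b.drop (v.length - p.length),
                  (List.take_append_drop _ b).symm, by rw [List.length_take]; omega,
                  by rw [List.length_drop]; omega⟩
              obtain ⟨c, e, hqce, hlc, hle⟩ :
                  ∃ c e : List A, q = c ++ e ∧ c.length = 2 * (v.length - p.length) ∧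
                    e.length = v.length - p.length :=
                ⟨q.take (2 * (v.length - p.length)), q.drop (2 * (v.length - p.length)),
                  (List.take_append_drop _ q).symm, by rw [List.length_take, ← hlen]; omega,
                  by rw [List.length_drop, ← hlen]; omega⟩
              have hw1 : pw p 2 ++ pw q 2 = (p ++ a) ++ (b ++ pw q 2) := by
                conv_lhs => rw [pw_two]
                conv_lhs => rw [show p ++ p = p ++ (a ++ b) by rw [← hab]]
                simp [List.append_assoc]
              have hv3 : pw v 3 = v ++ pw v 2 := rfl
              have hs1 := List.append_inj (hw1.symm.trans (hvk.trans hv3))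
                (by rw [List.length_append, hla]; omega)
              have hrest : b ++ pw q 2 = pw v 2 := hs1.2
              have hw2 : b ++ pw q 2 = (b ++ c) ++ (e ++ pw q 1) := by
                have hstep : pw q 2 = (c ++ e) ++ pw q 1 := by rw [← hqce]; rfl
                rw [hstep]
                simp [List.append_assoc]
              have hs2 := List.append_inj (hw2.symm.trans hrest)
                (by rw [List.length_append, hlb, hlc]; omega)
              have E1 : p ++ a = b ++ c := hs1.1.trans hs2.1.symm
              rw [hab, hbb] at E1
              have E1' : a ++ (b1 ++ (b2 ++ a)) = b1 ++ (b2 ++ c) := by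
                simpa [List.append_assoc] using E1
              have hs3 := List.append_inj E1' (by rw [hla, hlb1])
              have E2 : b1 ++ (b2 ++ a) = b2 ++ c := hs3.2
              rw [← hs3.1] at E2
              have hs4 := List.append_inj E2 (by rw [hla, hlb2])
              have hp3 : p = pw a 3 := by
                rw [pw_three, hab, hbb, ← hs3.1, ← hs4.1]
              exact absurd (hpprim a 3 hp3) (by omega)
          · -- k ≥ 4 impossible
            have h4d : 4 * v.length ≤ k * v.length := Nat.mul_le_mul_right _ hk4
            omega
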